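/- Three-stage impact theorem: for unit covectors u ≠ ±v, the following are equivalent: (i) ⟨u,v⟩ = -1/2; (ii) for every momentum p with ⟨p,u⟩ ≤ ⟨p,v⟩ < 0, one has p Γ(u)Γ(v)Γ(u) = p Γ(v)Γ(u)Γ(v), and this common value p_f is feasible, with explicitly ⟨p_f,u⟩ = -⟨p,v⟩ > 0 and ⟨p_f,v⟩ = -⟨p,u⟩ > 0. -/

import Mathlib

open Matrix

noncomputable def kin {n : ℕ} (M : Matrix (Fin n) (Fin n) ℝ)
    (x y : Matrix (Fin 1) (Fin n) ℝ) : ℝ :=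
  (x * M⁻¹ * yᵀ) 0 0

noncomputable def Gam {n : ℕ} (M : Matrix (Fin n) (Fin n) ℝ)
    (u : Matrix (Fin 1) (Fin n) ℝ) : Matrix (Fin n) (Fin n) ℝ :=
  1 - (2 / kin M u u) • (M⁻¹ * uᵀ * u)

section helpers

variable {n : ℕ} (M : Matrix (Fin n) (Fin n) ℝ)

lemma kin_add_left (x y z : Matrix (Fin 1) (Fin n) ℝ) :
    kin M (x + y) z = kin M x z + kin M y z := by
  simp [kin, Matrix.add_mul]

lemma kin_sub_left (x y z : Matrix (Fin 1) (Fin n) ℝ) :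
    kin M (x - y) z = kin M x z - kin M y z := by
  simp [kin, Matrix.sub_mul]

lemma kin_smul_left (r : ℝ) (x z : Matrix (Fin 1) (Fin n) ℝ) :
    kin M (r • x) z = r * kin M x z := by
  simp [kin, smul_mul_assoc]

lemma kin_neg_left (x z : Matrix (Fin 1) (Fin n) ℝ) :
    kin M (-x) z = - kin M x z := by
  simp [kin, neg_mul]

lemma kin_symm (hM : M.PosDef) (x y : Matrix (Fin 1) (Fin n) ℝ) :
    kin M x y = kin M y x := by
  have hMinv : M⁻¹ᵀ = M⁻¹ := by
    rw [Matrix.transpose_nonsing_inv]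
    congr 1
    simpa using hM.isHermitian.eq
  have : (x * M⁻¹ * yᵀ)ᵀ = y * M⁻¹ * xᵀ := by
    rw [transpose_mul, transpose_mul, transpose_transpose, hMinv, Matrix.mul_assoc]
  calc kin M x y = ((x * M⁻¹ * yᵀ)ᵀ) 0 0 := rfl
    _ = kin M y x := by rw [this]; rfl

lemma kin_pos (hM : M.PosDef) {x : Matrix (Fin 1) (Fin n) ℝ} (hx : x ≠ 0) :
    0 < kin M x x := by
  have hx0 : x 0 ≠ 0 := by
    intro h
    apply hx
    ext i j
    have : i = 0 := Subsingleton.elim i 0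
    subst this
    simpa using congrFun h j
  have h := hM.inv.dotProduct_mulVec_pos hx0
  have heq : kin M x x = dotProduct (star (x 0)) (M⁻¹ *ᵥ (x 0)) := by
    simp only [kin, Matrix.mul_apply, Matrix.transpose_apply, dotProduct,
      Matrix.mulVec, star_trivial]
    simp only [Finset.sum_mul, Finset.mul_sum]
    rw [Finset.sum_comm]
    apply Finset.sum_congr rfl; intro i _
    apply Finset.sum_congr rfl; intro j _
    ring
  rw [heq]; exact h

lemma mul_Gam (u p : Matrix (Fin 1) (Fin n) ℝ) (huu : kin M u u = 1) :
    p * Gam M u = p - (2 * kin M p u) • u := by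
  have h1 : p * (M⁻¹ * uᵀ * u) = kin M p u • u := by
    have : p * (M⁻¹ * uᵀ * u) = (p * M⁻¹ * uᵀ) * u := by
      simp only [Matrix.mul_assoc]
    rw [this]
    ext i j
    have hi : i = 0 := Subsingleton.elim i 0
    subst hi
    simp [Matrix.mul_apply, Fin.sum_univ_one, kin, mul_comm]
  rw [Gam, huu]
  rw [Matrix.mul_sub, Matrix.mul_one, Matrix.mul_smul, h1]
  rw [smul_smul]
  norm_num

end helpers

section main

variable {n : ℕ} {M : Matrix (Fin n) (Fin n) ℝ}

lemma triple_eq (hM : M.PosDef) (u v : Matrix (Fin 1) (Fin n) ℝ)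
    (huu : kin M u u = 1) (hvv : kin M v v = 1) (p : Matrix (Fin 1) (Fin n) ℝ) :
    p * Gam M u * Gam M v * Gam M u =
      p + (4 * kin M p v * kin M u v - 8 * kin M p u * (kin M u v)^2) • u
        + (4 * kin M p u * kin M u v - 2 * kin M p v) • v := by
  have hc : kin M v u = kin M u v := kin_symm M hM v u
  rw [mul_Gam M u p huu, mul_Gam M v _ hvv, mul_Gam M u _ huu]
  simp only [kin_sub_left, kin_smul_left, huu, hvv, hc]
  module

lemma kin_combo (hM : M.PosDef) (u v : Matrix (Fin 1) (Fin n) ℝ)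
    (huu : kin M u u = 1) (hvv : kin M v v = 1) (p : Matrix (Fin 1) (Fin n) ℝ)
    (r s : ℝ) :
    kin M (p + r • u + s • v) u = kin M p u + r + s * kin M u v ∧
    kin M (p + r • u + s • v) v = kin M p v + r * kin M u v + s := by
  have hc : kin M v u = kin M u v := kin_symm M hM v u
  constructor <;>
  · simp only [kin_add_left, kin_smul_left, huu, hvv, hc]
    ring

theorem three_stage_impact {n : ℕ}
    (M : Matrix (Fin n) (Fin n) ℝ) (hM : M.PosDef)
    (u v : Matrix (Fin 1) (Fin n) ℝ)
    (huu : kin M u u = 1) (hvv : kin M v v = 1)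
    (huv : u ≠ v) (huv' : u ≠ -v) :
    kin M u v = -(1/2) ↔
      ∀ p : Matrix (Fin 1) (Fin n) ℝ,
        kin M p u ≤ kin M p v → kin M p v < 0 →
        p * Gam M u * Gam M v * Gam M u = p * Gam M v * Gam M u * Gam M v ∧
        kin M (p * Gam M u * Gam M v * Gam M u) u = - kin M p v ∧
        kin M (p * Gam M u * Gam M v * Gam M u) v = - kin M p u ∧
        0 < kin M (p * Gam M u * Gam M v * Gam M u) u ∧
        0 < kin M (p * Gam M u * Gam M v * Gam M u) v := by
  have hc : kin M v u = kin M u v := kin_symm M hM v u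
  set c := kin M u v with hcdef
  -- bounds on c
  have hlt1 : c < 1 := by
    have hne : u - v ≠ 0 := sub_ne_zero.mpr huv
    have hpos := kin_pos M hM hne
    have : kin M (u - v) (u - v) = 2 - 2 * c := by
      have h1 : kin M u (u - v) = 1 - c := by
        rw [kin_symm M hM u (u - v), kin_sub_left]; rw [huu, hc]
      have h2 : kin M v (u - v) = c - 1 := by
        rw [kin_symm M hM v (u - v), kin_sub_left]
        rw [hvv]; try ring
      rw [kin_sub_left, h1, h2]; ring
    linarith [this ▸ hpos]
  have hgt1 : -1 < c := by
    have hne : u + v ≠ 0 := by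
      intro h
      exact huv' (by rw [eq_neg_iff_add_eq_zero]; exact h)
    have hpos := kin_pos M hM hne
    have : kin M (u + v) (u + v) = 2 + 2 * c := by
      have h1 : kin M u (u + v) = 1 + c := by
        rw [kin_symm M hM u (u + v), kin_add_left, huu, hc]
      have h2 : kin M v (u + v) = c + 1 := by
        rw [kin_symm M hM v (u + v), kin_add_left, hvv]; try ring
      rw [kin_add_left, h1, h2]; ring
    linarith [this ▸ hpos]
  constructor
  · intro hcv p hab hb0
    set a := kin M p u with ha
    set b := kin M p v with hb
    have ha0 : a < 0 := lt_of_le_of_lt hab hb0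
    have htu := triple_eq hM u v huu hvv p
    have htv := triple_eq hM v u hvv huu p
    have hE : p * Gam M u * Gam M v * Gam M u
        = p + (-2*a - 2*b) • u + (-2*a - 2*b) • v := by
      rw [htu, ← ha, ← hb, ← hcdef, hcv]
      module
    have hE' : p * Gam M v * Gam M u * Gam M v
        = p + (-2*a - 2*b) • u + (-2*a - 2*b) • v := by
      rw [htv, ← ha, ← hb, hc, hcv]
      module
    have hk := kin_combo hM u v huu hvv p (-2*a - 2*b) (-2*a - 2*b)
    have hku : kin M (p * Gam M u * Gam M v * Gam M u) u = -b := by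
      rw [hE, hk.1, ← hcdef, hcv]; ring
    have hkv : kin M (p * Gam M u * Gam M v * Gam M u) v = -a := by
      rw [hE, hk.2, ← hcdef, hcv]; ring
    refine ⟨hE.trans hE'.symm, hku, hkv, ?_, ?_⟩
    · rw [hku]; linarith
    · rw [hkv]; linarith
  · intro H
    set p := -(u + v) with hp
    have hpu : kin M p u = -(1 + c) := by
      rw [hp, kin_neg_left, kin_add_left, huu, hc]; try ring
    have hpv : kin M p v = -(1 + c) := by
      rw [hp, kin_neg_left, kin_add_left, hvv]; try ring
    have h1 : kin M p u ≤ kin M p v := by rw [hpu, hpv]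
    have h2 : kin M p v < 0 := by rw [hpv]; linarith
    obtain ⟨_, hku, _, _, _⟩ := H p h1 h2
    have htu := triple_eq hM u v huu hvv p
    have hk := kin_combo hM u v huu hvv p
      (4 * kin M p v * c - 8 * kin M p u * c^2) (4 * kin M p u * c - 2 * kin M p v)
    rw [htu, hk.1, hpu, hpv, ← hcdef] at hku
    -- hku : -(1+c) + (4*(-(1+c))*c - 8*(-(1+c))*c^2) + (4*(-(1+c))*c - 2*(-(1+c)))*c = -(-(1+c))
    have hfac : (1 + c) * (c - 1) * (4*c + 2) = 0 := by nlinarith [hku]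
    have h1c : (1 : ℝ) + c ≠ 0 := by linarith
    have h2c : c - 1 ≠ 0 := by linarith
    rcases mul_eq_zero.mp hfac with h | h
    · rcases mul_eq_zero.mp h with h' | h'
      · exact absurd h' h1c
      · exact absurd h' h2c
    · linarith

end main
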